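/- Let n, k ∈ ℕ. A positively homogeneous (not necessarily convex) continuous piecewise linear function f : ℝ^n → ℝ can be computed by a ReLU neural network with k hidden layers if and only if f can be written as f = g − h, where g and h are positively homogeneous convex continuous piecewise linear functions whose Newton polytopes N̄(g) and N̄(h) both belong to the class Newt_n^(k). -/

import Mathlib

open Finset

/-- Componentwise ReLU. -/
noncomputable def relu {m : ℕ} (x : Fin m → ℝ) : Fin m → ℝ := fun i => max 0 (x i)

/-- `T` is an affine map given by a matrix and a bias vector. -/
def IsAffineMap {n m : ℕ} (T : (Fin n → ℝ) → (Fin m → ℝ)) : Prop :=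
  ∃ (A : Matrix (Fin m) (Fin n) ℝ) (b : Fin m → ℝ), ∀ x, T x = A.mulVec x + b

/-- `IsStack k n m g` : `g = σ ∘ T⁽ᵏ⁾ ∘ σ ∘ ⋯ ∘ σ ∘ T⁽¹⁾` for affine maps `T⁽ˡ⁾`,
with input dimension `n` and output dimension `m`. -/
inductive IsStack : (k n m : ℕ) → ((Fin n → ℝ) → (Fin m → ℝ)) → Prop where
  | base (n : ℕ) : IsStack 0 n n id
  | step {k n m' m : ℕ} {h : (Fin n → ℝ) → (Fin m' → ℝ)}
      (T : (Fin m' → ℝ) → (Fin m → ℝ)) (hT : IsAffineMap T) (hh : IsStack k n m' h) :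
      IsStack (k + 1) n m (relu ∘ T ∘ h)

/-- `f ∈ ReLU_n(k)`: `f` is computed by a ReLU neural network with `k` hidden layers and
input dimension `n` (the last layer is a linear map, without bias). -/
def InReLU (n k : ℕ) (f : (Fin n → ℝ) → ℝ) : Prop :=
  ∃ (m : ℕ) (g : (Fin n → ℝ) → (Fin m → ℝ)) (c : Fin m → ℝ),
    IsStack k n m g ∧ ∀ x, f x = ∑ i, c i * g x i

/-- A polyhedron: a finite intersection of closed halfspaces. -/
def IsPolyhedron {n : ℕ} (P : Set (Fin n → ℝ)) : Prop :=
  ∃ (m : ℕ) (A : Fin m → Fin n → ℝ) (b : Fin m → ℝ),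
    P = {x | ∀ i, ∑ j, A i j * x j ≤ b i}

/-- `f ∈ CPWL_n`: `f` is continuous and there are finitely many polyhedra covering `ℝⁿ`
such that `f` is affine on each of them. -/
def IsCPWL {n : ℕ} (f : (Fin n → ℝ) → ℝ) : Prop :=
  Continuous f ∧ ∃ (N : ℕ) (P : Fin N → Set (Fin n → ℝ)),
    (∀ i, IsPolyhedron (P i)) ∧ (⋃ i, P i) = Set.univ ∧
    ∀ i, ∃ (a : Fin n → ℝ) (c : ℝ), ∀ x ∈ P i, f x = (∑ j, a j * x j) + c

/-- Maximum of `v` over a finite set `S` (junk value `0` if `S = ∅`). -/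
noncomputable def finMaxOn {ι : Type*} (S : Finset ι) (v : ι → ℝ) : ℝ :=
  if h : S.Nonempty then S.sup' h v else 0

/-- `f ∈ MAX_n(p)`: `f` is a finite linear combination of maxima of (at most) `p`
affine functions. -/
def InMAX (n p : ℕ) (f : (Fin n → ℝ) → ℝ) : Prop :=
  ∃ (N : ℕ) (lam : Fin N → ℝ) (a : Fin N → Fin p → Fin n → ℝ) (b : Fin N → Fin p → ℝ),
    ∀ x, f x = ∑ j, lam j * finMaxOn Finset.univ (fun i => (∑ t, a j i t * x t) + b j i)

open Pointwise in
/-- The classes `Newt_n^(k)` of polytopes in `ℝⁿ`: `Newt_n^(0)` consists of the one-point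
polytopes, and `Newt_n^(k+1)` consists of all finite Minkowski sums
`Σᵢ conv(Pᵢ ∪ Qᵢ)` with `Pᵢ, Qᵢ ∈ Newt_n^(k)`. -/
def Newt (n : ℕ) : ℕ → Set (Set (Fin n → ℝ))
  | 0 => {P | ∃ a : Fin n → ℝ, P = {a}}
  | k + 1 => {P | ∃ (p : ℕ) (Q R : Fin p → Set (Fin n → ℝ)),
      (∀ i, Q i ∈ Newt n k) ∧ (∀ i, R i ∈ Newt n k) ∧
      P = ∑ i : Fin p, convexHull ℝ (Q i ∪ R i)}

/-- `g` is a positively homogeneous convex CPWL function (written as a maximum of linear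
functions `x ↦ ⟨a i, x⟩`) whose Newton polytope `N̄(g) = conv{a₁, …, a_p}` lies in
`Newt_n^(k)`. -/
def ConvexWithNewtonIn (n k : ℕ) (g : (Fin n → ℝ) → ℝ) : Prop :=
  ∃ (p : ℕ) (a : Fin p → Fin n → ℝ), 0 < p ∧
    (∀ x, g x = finMaxOn Finset.univ (fun i => ∑ t, a i t * x t)) ∧
    convexHull ℝ (Set.range a) ∈ Newt n k

section maxOnLemmas

variable {ι κ : Type*} [Fintype ι] [Fintype κ]

lemma maxOn_eq_sup' [Nonempty ι] (v : ι → ℝ) :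
    finMaxOn Finset.univ v = Finset.univ.sup' Finset.univ_nonempty v := by
  simp [finMaxOn, Finset.univ_nonempty]

lemma le_maxOn [Nonempty ι] (v : ι → ℝ) (i : ι) : v i ≤ finMaxOn Finset.univ v := by
  rw [maxOn_eq_sup']; exact Finset.le_sup' v (Finset.mem_univ i)

lemma maxOn_le [Nonempty ι] (v : ι → ℝ) {c : ℝ} (h : ∀ i, v i ≤ c) :
    finMaxOn Finset.univ v ≤ c := by
  rw [maxOn_eq_sup']; exact Finset.sup'_le _ _ (fun i _ => h i)

lemma exists_maxOn [Nonempty ι] (v : ι → ℝ) : ∃ i, finMaxOn Finset.univ v = v i := by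
  rw [maxOn_eq_sup']
  obtain ⟨i, -, hi⟩ := Finset.exists_mem_eq_sup' Finset.univ_nonempty v
  exact ⟨i, hi⟩

lemma maxOn_comp_equiv [Nonempty ι] (e : ι ≃ κ) (v : κ → ℝ) :
    finMaxOn Finset.univ (fun i => v (e i)) = finMaxOn Finset.univ v := by
  haveI : Nonempty κ := ⟨e (Classical.arbitrary ι)⟩
  apply le_antisymm
  · exact maxOn_le _ fun i => le_maxOn v (e i)
  · refine maxOn_le _ fun j => ?_
    simpa using le_maxOn (fun i => v (e i)) (e.symm j)

lemma maxOn_prod_add [Nonempty ι] [Nonempty κ] (u : ι → ℝ) (v : κ → ℝ) :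
    finMaxOn Finset.univ (fun z : ι × κ => u z.1 + v z.2) =
      finMaxOn Finset.univ u + finMaxOn Finset.univ v := by
  apply le_antisymm
  · exact maxOn_le _ fun z => add_le_add (le_maxOn u z.1) (le_maxOn v z.2)
  · obtain ⟨i, hi⟩ := exists_maxOn u
    obtain ⟨j, hj⟩ := exists_maxOn v
    rw [hi, hj]
    exact le_maxOn (fun z : ι × κ => u z.1 + v z.2) (i, j)

lemma maxOn_sum_elim [Nonempty ι] [Nonempty κ] (u : ι → ℝ) (v : κ → ℝ) :
    finMaxOn Finset.univ (Sum.elim u v) = max (finMaxOn Finset.univ u) (finMaxOn Finset.univ v) := by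
  apply le_antisymm
  · refine maxOn_le _ fun z => ?_
    cases z with
    | inl i => exact le_max_of_le_left (le_maxOn u i)
    | inr j => exact le_max_of_le_right (le_maxOn v j)
  · refine max_le (maxOn_le _ fun i => ?_) (maxOn_le _ fun j => ?_)
    · exact le_maxOn (Sum.elim u v) (Sum.inl i)
    · exact le_maxOn (Sum.elim u v) (Sum.inr j)

lemma maxOn_smul [Nonempty ι] (u : ι → ℝ) {c : ℝ} (hc : 0 ≤ c) :
    finMaxOn Finset.univ (fun i => c * u i) = c * finMaxOn Finset.univ u := by
  apply le_antisymm
  · exact maxOn_le _ fun i => mul_le_mul_of_nonneg_left (le_maxOn u i) hc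
  · obtain ⟨i, hi⟩ := exists_maxOn u
    rw [hi]
    exact le_maxOn (fun i => c * u i) i

lemma maxOn_const [Nonempty ι] (c : ℝ) : finMaxOn Finset.univ (fun _ : ι => c) = c := by
  exact le_antisymm (maxOn_le _ fun _ => le_rfl) (le_maxOn (fun _ : ι => c) (Classical.arbitrary ι))

lemma abs_maxOn_sub_maxOn_le [Nonempty ι] (u δ : ι → ℝ) {B : ℝ} (hB : ∀ i, |δ i| ≤ B) :
    |finMaxOn Finset.univ (fun i => u i + δ i) - finMaxOn Finset.univ u| ≤ B := by
  rw [abs_le]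
  constructor
  · have h1 : finMaxOn Finset.univ u ≤ finMaxOn Finset.univ (fun i => u i + δ i) + B := by
      refine maxOn_le _ fun i => ?_
      have := le_maxOn (fun i => u i + δ i) i
      have h2 := (abs_le.1 (hB i)).1
      linarith
    linarith
  · have h1 : finMaxOn Finset.univ (fun i => u i + δ i) ≤ finMaxOn Finset.univ u + B := by
      refine maxOn_le _ fun i => ?_
      have := le_maxOn u i
      have h2 := (abs_le.1 (hB i)).2
      linarith
    linarith

end maxOnLemmas

section AuxNewt
open Pointwise
set_option linter.unusedSectionVars false
section setAlg

variable {E : Type*} [AddCommMonoid E] [Module ℝ E]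

lemma smul_set_add' (c : ℝ) (S T : Set E) : c • (S + T) = c • S + c • T := by
  ext z
  constructor
  · rintro ⟨w, hw, rfl⟩
    rw [Set.mem_add] at hw
    obtain ⟨s, hs, t, ht, rfl⟩ := hw
    exact Set.mem_add.2 ⟨c • s, ⟨s, hs, rfl⟩, c • t, ⟨t, ht, rfl⟩, (smul_add c s t).symm⟩
  · intro hz
    rw [Set.mem_add] at hz
    obtain ⟨s', ⟨s, hs, rfl⟩, t', ⟨t, ht, rfl⟩, rfl⟩ := hz
    exact ⟨s + t, Set.mem_add.2 ⟨s, hs, t, ht, rfl⟩, smul_add c s t⟩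

lemma smul_set_sum' (c : ℝ) {p : ℕ} (f : Fin p → Set E) :
    c • (∑ i, f i) = ∑ i, c • f i := by
  induction p with
  | zero =>
      simp only [Finset.univ_eq_empty, Finset.sum_empty]
      ext z
      simp [Set.mem_smul_set]
  | succ p ih =>
      rw [Fin.sum_univ_succ, Fin.sum_univ_succ, smul_set_add', ih]

lemma convex_sum_sets {p : ℕ} (f : Fin p → Set E) (h : ∀ i, Convex ℝ (f i)) :
    Convex ℝ (∑ i, f i) := by
  induction p with
  | zero =>
      simp only [Finset.univ_eq_empty, Finset.sum_empty]
      have : (0 : Set E) = {0} := rfl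
      rw [this]; exact convex_singleton 0
  | succ p ih =>
      rw [Fin.sum_univ_succ]
      exact (h 0).add (ih _ (fun i => h i.succ))

lemma nonempty_sum_sets {p : ℕ} (f : Fin p → Set E) (h : ∀ i, (f i).Nonempty) :
    (∑ i, f i).Nonempty := by
  induction p with
  | zero => simp only [Finset.univ_eq_empty, Finset.sum_empty]; exact ⟨0, rfl⟩
  | succ p ih =>
      rw [Fin.sum_univ_succ]
      exact (h 0).add (ih _ (fun i => h i.succ))

end setAlg

lemma newt_nonempty {n k : ℕ} {P : Set (Fin n → ℝ)} (h : P ∈ Newt n k) : P.Nonempty := by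
  induction k generalizing P with
  | zero => obtain ⟨a, rfl⟩ := h; exact ⟨a, rfl⟩
  | succ k ih =>
      obtain ⟨p, Q, R, hQ, hR, rfl⟩ := h
      exact nonempty_sum_sets _ fun i =>
        ((ih (hQ i)).mono ((Set.subset_union_left).trans (subset_convexHull ℝ _)))

lemma newt_convex {n k : ℕ} {P : Set (Fin n → ℝ)} (h : P ∈ Newt n k) : Convex ℝ P := by
  induction k generalizing P with
  | zero => obtain ⟨a, rfl⟩ := h; exact convex_singleton a
  | succ k ih =>
      obtain ⟨p, Q, R, hQ, hR, rfl⟩ := h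
      exact convex_sum_sets _ fun i => convex_convexHull ℝ _

lemma newt_mono {n k : ℕ} {P : Set (Fin n → ℝ)} (h : P ∈ Newt n k) : P ∈ Newt n (k+1) := by
  refine ⟨1, fun _ => P, fun _ => P, fun _ => h, fun _ => h, ?_⟩
  rw [Fin.sum_univ_one, Set.union_self, (newt_convex h).convexHull_eq]

lemma singleton_mem_newt {n : ℕ} (a : Fin n → ℝ) : ∀ k, ({a} : Set (Fin n → ℝ)) ∈ Newt n k
  | 0 => ⟨a, rfl⟩
  | (k+1) => newt_mono (singleton_mem_newt a k)

lemma newt_add {n k : ℕ} {P Q : Set (Fin n → ℝ)} (hP : P ∈ Newt n k) (hQ : Q ∈ Newt n k) :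
    P + Q ∈ Newt n k := by
  induction k generalizing P Q with
  | zero =>
      obtain ⟨a, rfl⟩ := hP; obtain ⟨b, rfl⟩ := hQ
      exact ⟨a + b, Set.singleton_add_singleton⟩
  | succ k ih =>
      obtain ⟨p, A, B, hA, hB, rfl⟩ := hP
      obtain ⟨q, C, D, hC, hD, rfl⟩ := hQ
      refine ⟨p + q, Sum.elim A C ∘ finSumFinEquiv.symm, Sum.elim B D ∘ finSumFinEquiv.symm,
        ?_, ?_, ?_⟩
      · intro i; rcases h : finSumFinEquiv.symm i with j | j <;> simp [h, hA, hC]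
      · intro i; rcases h : finSumFinEquiv.symm i with j | j <;> simp [h, hB, hD]
      · rw [← Equiv.sum_comp finSumFinEquiv
            (fun i => convexHull ℝ ((Sum.elim A C ∘ finSumFinEquiv.symm) i ∪
              (Sum.elim B D ∘ finSumFinEquiv.symm) i)), Fintype.sum_sum_type]
        simp only [Function.comp_apply, Equiv.symm_apply_apply]
        simp

lemma newt_smul {n k : ℕ} (c : ℝ) {P : Set (Fin n → ℝ)} (hP : P ∈ Newt n k) :
    c • P ∈ Newt n k := by
  induction k generalizing P with
  | zero =>
      obtain ⟨a, rfl⟩ := hP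
      exact ⟨c • a, Set.smul_set_singleton⟩
  | succ k ih =>
      obtain ⟨p, Q, R, hQ, hR, rfl⟩ := hP
      refine ⟨p, fun i => c • Q i, fun i => c • R i, fun i => ih (hQ i), fun i => ih (hR i), ?_⟩
      rw [smul_set_sum']
      congr 1
      ext i : 1
      rw [← Set.smul_set_union, convexHull_smul]

lemma newt_sum {n k p : ℕ} (f : Fin p → Set (Fin n → ℝ)) (h : ∀ i, f i ∈ Newt n k) :
    (∑ i, f i) ∈ Newt n k := by
  induction p with
  | zero =>
      simp only [Finset.univ_eq_empty, Finset.sum_empty]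
      have : (0 : Set (Fin n → ℝ)) = {0} := rfl
      rw [this]; exact singleton_mem_newt 0 k
  | succ p ih =>
      rw [Fin.sum_univ_succ]
      exact newt_add (h 0) (ih _ fun i => h i.succ)

end AuxNewt
section AuxRep
open Pointwise

variable {n : ℕ}

lemma range_add_family {ι κ : Type*} (a : ι → Fin n → ℝ) (b : κ → Fin n → ℝ) :
    Set.range (fun z : ι × κ => a z.1 + b z.2) = Set.range a + Set.range b := by
  ext z
  constructor
  · rintro ⟨⟨i, j⟩, rfl⟩
    exact Set.mem_add.2 ⟨a i, ⟨i, rfl⟩, b j, ⟨j, rfl⟩, rfl⟩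
  · intro hz
    rw [Set.mem_add] at hz
    obtain ⟨x, ⟨i, rfl⟩, y, ⟨j, rfl⟩, rfl⟩ := hz
    exact ⟨(i, j), rfl⟩

/-- Reindexing a finite nonempty family as a `Fin`-family, preserving range and pointwise max. -/
lemma exists_fin_reindex {ι : Type} [Fintype ι] [Nonempty ι]
    (a : ι → Fin n → ℝ) (β : ι → ℝ) :
    ∃ (p : ℕ) (a' : Fin p → Fin n → ℝ) (β' : Fin p → ℝ), 0 < p ∧
      Set.range a' = Set.range a ∧
      ∀ x : Fin n → ℝ, finMaxOn Finset.univ (fun i => (∑ t, a' i t * x t) + β' i) =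
        finMaxOn Finset.univ (fun i => (∑ t, a i t * x t) + β i) := by
  classical
  set e := (Fintype.equivFin ι).symm
  refine ⟨Fintype.card ι, a ∘ e, β ∘ e, Fintype.card_pos, ?_, ?_⟩
  · exact e.surjective.range_comp a
  · intro x
    exact maxOn_comp_equiv e (fun i => (∑ t, a i t * x t) + β i)

lemma maxOn_fin_one (v : Fin 1 → ℝ) : finMaxOn Finset.univ v = v 0 :=
  le_antisymm (maxOn_le _ fun i => by rw [Subsingleton.elim i 0]) (le_maxOn v 0)

lemma exists_fin_reindex_lin {ι : Type} [Fintype ι] [Nonempty ι]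
    (a : ι → Fin n → ℝ) :
    ∃ (p : ℕ) (a' : Fin p → Fin n → ℝ), 0 < p ∧
      Set.range a' = Set.range a ∧
      ∀ x : Fin n → ℝ, finMaxOn Finset.univ (fun i => ∑ t, a' i t * x t) =
        finMaxOn Finset.univ (fun i => ∑ t, a i t * x t) := by
  classical
  set e := (Fintype.equivFin ι).symm
  refine ⟨Fintype.card ι, a ∘ e, Fintype.card_pos, e.surjective.range_comp a, ?_⟩
  intro x
  exact maxOn_comp_equiv e (fun i => ∑ t, a i t * x t)

/-- `u` is the max of the linear functions indexed by `a`, whose convex hull is `P`. -/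
def RepEq (P : Set (Fin n → ℝ)) (u : (Fin n → ℝ) → ℝ) : Prop :=
  ∃ (p : ℕ) (a : Fin p → Fin n → ℝ), 0 < p ∧ convexHull ℝ (Set.range a) = P ∧
    ∀ x, u x = finMaxOn Finset.univ (fun i => ∑ t, a i t * x t)

/-- `u` is a max of affine functions whose linear parts have convex hull in `Newt n k`. -/
def RepIn (k : ℕ) (u : (Fin n → ℝ) → ℝ) : Prop :=
  ∃ (p : ℕ) (a : Fin p → Fin n → ℝ) (β : Fin p → ℝ), 0 < p ∧
    convexHull ℝ (Set.range a) ∈ Newt n k ∧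
    ∀ x, u x = finMaxOn Finset.univ (fun i => (∑ t, a i t * x t) + β i)

lemma repEq_singleton (a : Fin n → ℝ) :
    RepEq {a} (fun x => ∑ t, a t * x t) := by
  refine ⟨1, fun _ => a, one_pos, ?_, ?_⟩
  · rw [Set.range_const, convexHull_singleton]
  · intro x
    rw [maxOn_fin_one]

lemma repEq_add {P Q : Set (Fin n → ℝ)} {u v : (Fin n → ℝ) → ℝ}
    (hu : RepEq P u) (hv : RepEq Q v) : RepEq (P + Q) (fun x => u x + v x) := by
  obtain ⟨p, a, hp, ha, hu⟩ := hu
  obtain ⟨q, b, hq, hb, hv⟩ := hv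
  haveI : Nonempty (Fin p) := ⟨⟨0, hp⟩⟩
  haveI : Nonempty (Fin q) := ⟨⟨0, hq⟩⟩
  obtain ⟨r, c, hr, hrange, hmax⟩ :=
    exists_fin_reindex_lin (fun z : Fin p × Fin q => a z.1 + b z.2)
  refine ⟨r, c, hr, ?_, ?_⟩
  · rw [hrange, range_add_family, convexHull_add, ha, hb]
  · intro x
    show u x + v x = _
    rw [hmax x]
    have h2 : ∀ z : Fin p × Fin q, (∑ t, (a z.1 + b z.2) t * x t) =
        (∑ t, a z.1 t * x t) + (∑ t, b z.2 t * x t) := by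
      intro z
      rw [← Finset.sum_add_distrib]
      congr 1; ext t; simp [add_mul]
    simp only [h2]
    rw [maxOn_prod_add (fun i => ∑ t, a i t * x t) (fun j => ∑ t, b j t * x t), hu x, hv x]

lemma repEq_max {P Q : Set (Fin n → ℝ)} {u v : (Fin n → ℝ) → ℝ}
    (hu : RepEq P u) (hv : RepEq Q v) :
    RepEq (convexHull ℝ (P ∪ Q)) (fun x => max (u x) (v x)) := by
  obtain ⟨p, a, hp, ha, hu⟩ := hu
  obtain ⟨q, b, hq, hb, hv⟩ := hv
  haveI : Nonempty (Fin p) := ⟨⟨0, hp⟩⟩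
  haveI : Nonempty (Fin q) := ⟨⟨0, hq⟩⟩
  obtain ⟨r, c, hr, hrange, hmax⟩ := exists_fin_reindex_lin (Sum.elim a b)
  refine ⟨r, c, hr, ?_, ?_⟩
  · rw [hrange, Set.Sum.elim_range, ← ha, ← hb]
    rw [convexHull_convexHull_union_left, convexHull_convexHull_union_right]
  · intro x
    show max (u x) (v x) = _
    rw [hmax x]
    have h2 : (fun z : Fin p ⊕ Fin q => ∑ t, Sum.elim a b z t * x t) =
        Sum.elim (fun i => ∑ t, a i t * x t) (fun j => ∑ t, b j t * x t) := by
      ext z; cases z <;> rfl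
    rw [h2, maxOn_sum_elim, hu x, hv x]

lemma repEq_zero : RepEq (0 : Set (Fin n → ℝ)) (fun _ => 0) := by
  have h : (0 : Set (Fin n → ℝ)) = {0} := rfl
  rw [h]
  have := repEq_singleton (0 : Fin n → ℝ)
  simpa using this

lemma repEq_sum {p : ℕ} (P : Fin p → Set (Fin n → ℝ)) (u : Fin p → (Fin n → ℝ) → ℝ)
    (h : ∀ i, RepEq (P i) (u i)) :
    RepEq (∑ i, P i) (fun x => ∑ i, u i x) := by
  induction p with
  | zero => simpa using repEq_zero
  | succ p ih =>
      have h1 : (fun x => ∑ i, u i x) = fun x => u 0 x + ∑ i : Fin p, u i.succ x := by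
        funext x; rw [Fin.sum_univ_succ]
      rw [h1, Fin.sum_univ_succ]
      exact repEq_add (h 0) (ih _ _ fun i => h i.succ)

lemma repEq_unique {P : Set (Fin n → ℝ)} {u v : (Fin n → ℝ) → ℝ}
    (hu : RepEq P u) (hv : RepEq P v) : ∀ x, u x = v x := by
  obtain ⟨p, a, hp, ha, hu⟩ := hu
  obtain ⟨q, b, hq, hb, hv⟩ := hv
  haveI : Nonempty (Fin p) := ⟨⟨0, hp⟩⟩
  haveI : Nonempty (Fin q) := ⟨⟨0, hq⟩⟩
  have key : ∀ (x : Fin n → ℝ) {r s : ℕ} (_ : Nonempty (Fin r)) (_ : Nonempty (Fin s))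
      (c : Fin r → Fin n → ℝ) (d : Fin s → Fin n → ℝ)
      (_ : Set.range c ⊆ convexHull ℝ (Set.range d)),
      finMaxOn Finset.univ (fun i => ∑ t, c i t * x t) ≤
        finMaxOn Finset.univ (fun j => ∑ t, d j t * x t) := by
    intro x r s hr hs c d hsub
    refine maxOn_le _ fun i => ?_
    set L : (Fin n → ℝ) →ₗ[ℝ] ℝ :=
      { toFun := fun w => ∑ t, w t * x t
        map_add' := by
          intro w w'
          rw [← Finset.sum_add_distrib]
          exact Finset.sum_congr rfl fun t _ => by simp [add_mul]
        map_smul' := by intro m w; rw [Finset.smul_sum]; simp [mul_assoc] } with hL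
    have hconv : ConvexOn ℝ (convexHull ℝ (Set.range d)) L :=
      L.convexOn (convex_convexHull ℝ _)
    have hmem : c i ∈ convexHull ℝ (Set.range d) := hsub ⟨i, rfl⟩
    obtain ⟨y, ⟨j, rfl⟩, hy⟩ :=
      hconv.exists_ge_of_mem_convexHull (subset_convexHull ℝ _) hmem
    exact le_trans hy (le_maxOn (fun j => ∑ t, d j t * x t) j)
  intro x
  rw [hu x, hv x]
  have h1 : Set.range a ⊆ convexHull ℝ (Set.range b) := by
    rw [hb, ← ha]; exact subset_convexHull ℝ _
  have h2 : Set.range b ⊆ convexHull ℝ (Set.range a) := by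
    rw [ha, ← hb]; exact subset_convexHull ℝ _
  exact le_antisymm (key x ‹_› ‹_› a b h1) (key x ‹_› ‹_› b a h2)

end AuxRep
section AuxRepIn
open Pointwise

variable {n : ℕ}

lemma repIn_const (k : ℕ) (c : ℝ) : RepIn k (fun _ : Fin n → ℝ => c) := by
  refine ⟨1, fun _ => 0, fun _ => c, one_pos, ?_, ?_⟩
  · rw [Set.range_const, convexHull_singleton]
    exact singleton_mem_newt 0 k
  · intro x
    rw [maxOn_fin_one]
    simp

lemma repIn_mono {k : ℕ} {u : (Fin n → ℝ) → ℝ} (h : RepIn k u) : RepIn (k + 1) u := by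
  obtain ⟨p, a, β, hp, hmem, hu⟩ := h
  exact ⟨p, a, β, hp, newt_mono hmem, hu⟩

lemma repIn_add {k : ℕ} {u v : (Fin n → ℝ) → ℝ} (hu : RepIn k u) (hv : RepIn k v) :
    RepIn k (fun x => u x + v x) := by
  obtain ⟨p, a, β, hp, ha, hu⟩ := hu
  obtain ⟨q, b, γ, hq, hb, hv⟩ := hv
  haveI : Nonempty (Fin p) := ⟨⟨0, hp⟩⟩
  haveI : Nonempty (Fin q) := ⟨⟨0, hq⟩⟩
  obtain ⟨r, c, δ, hr, hrange, hmax⟩ :=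
    exists_fin_reindex (fun z : Fin p × Fin q => a z.1 + b z.2) (fun z => β z.1 + γ z.2)
  refine ⟨r, c, δ, hr, ?_, ?_⟩
  · rw [hrange, range_add_family, convexHull_add]
    exact newt_add ha hb
  · intro x
    show u x + v x = _
    rw [hmax x]
    have h2 : (fun z : Fin p × Fin q => (∑ t, (a z.1 + b z.2) t * x t) + (β z.1 + γ z.2)) =
        (fun z : Fin p × Fin q => ((∑ t, a z.1 t * x t) + β z.1) +
          ((∑ t, b z.2 t * x t) + γ z.2)) := by
      funext z
      have : (∑ t, (a z.1 + b z.2) t * x t) = (∑ t, a z.1 t * x t) + ∑ t, b z.2 t * x t := by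
        rw [← Finset.sum_add_distrib]
        exact Finset.sum_congr rfl fun t _ => by simp [add_mul]
      rw [this]; ring
    rw [h2, maxOn_prod_add (fun i => (∑ t, a i t * x t) + β i)
      (fun j => (∑ t, b j t * x t) + γ j), hu x, hv x]

lemma repIn_smul {k : ℕ} {u : (Fin n → ℝ) → ℝ} {c : ℝ} (hc : 0 ≤ c) (hu : RepIn k u) :
    RepIn k (fun x => c * u x) := by
  obtain ⟨p, a, β, hp, ha, hu⟩ := hu
  haveI : Nonempty (Fin p) := ⟨⟨0, hp⟩⟩
  refine ⟨p, fun i => c • a i, fun i => c * β i, hp, ?_, ?_⟩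
  · rw [Set.range_smul, convexHull_smul]
    exact newt_smul c ha
  · intro x
    have h2 : (fun i : Fin p => (∑ t, (c • a i) t * x t) + c * β i) =
        (fun i : Fin p => c * ((∑ t, a i t * x t) + β i)) := by
      funext i
      rw [mul_add, Finset.mul_sum]
      congr 1
      exact Finset.sum_congr rfl fun t _ => by simp [Pi.smul_apply]; ring
    show c * u x = _
    rw [hu x, h2, maxOn_smul (fun i : Fin p => (∑ t, a i t * x t) + β i) hc]

lemma repIn_sum {k p : ℕ} (u : Fin p → (Fin n → ℝ) → ℝ) (h : ∀ i, RepIn k (u i)) :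
    RepIn k (fun x => ∑ i, u i x) := by
  induction p with
  | zero => simpa using repIn_const k 0
  | succ p ih =>
      have h1 : (fun x => ∑ i, u i x) = fun x => u 0 x + ∑ i : Fin p, u i.succ x := by
        funext x; rw [Fin.sum_univ_succ]
      rw [h1]
      exact repIn_add (h 0) (ih _ fun i => h i.succ)

lemma newt_convexHull_union {k : ℕ} {P Q : Set (Fin n → ℝ)}
    (hP : P ∈ Newt n k) (hQ : Q ∈ Newt n k) : convexHull ℝ (P ∪ Q) ∈ Newt n (k + 1) := by
  exact ⟨1, fun _ => P, fun _ => Q, fun _ => hP, fun _ => hQ, by rw [Fin.sum_univ_one]⟩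

lemma repIn_max {k : ℕ} {u v : (Fin n → ℝ) → ℝ} (hu : RepIn k u) (hv : RepIn k v) :
    RepIn (k + 1) (fun x => max (u x) (v x)) := by
  obtain ⟨p, a, β, hp, ha, hu⟩ := hu
  obtain ⟨q, b, γ, hq, hb, hv⟩ := hv
  haveI : Nonempty (Fin p) := ⟨⟨0, hp⟩⟩
  haveI : Nonempty (Fin q) := ⟨⟨0, hq⟩⟩
  obtain ⟨r, c, δ, hr, hrange, hmax⟩ :=
    exists_fin_reindex (Sum.elim a b) (Sum.elim β γ)
  refine ⟨r, c, δ, hr, ?_, ?_⟩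
  · rw [hrange, Set.Sum.elim_range]
    have h1 : convexHull ℝ (Set.range a ∪ Set.range b) =
        convexHull ℝ (convexHull ℝ (Set.range a) ∪ convexHull ℝ (Set.range b)) := by
      rw [convexHull_convexHull_union_left, convexHull_convexHull_union_right]
    rw [h1]
    exact newt_convexHull_union ha hb
  · intro x
    show max (u x) (v x) = _
    rw [hmax x]
    have h2 : (fun z : Fin p ⊕ Fin q => (∑ t, Sum.elim a b z t * x t) + Sum.elim β γ z) =
        Sum.elim (fun i => (∑ t, a i t * x t) + β i) (fun j => (∑ t, b j t * x t) + γ j) := by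
      funext z; cases z <;> rfl
    rw [h2, maxOn_sum_elim, hu x, hv x]

/-- Every coordinate of a `k`-layer stack is a difference of `RepIn k` functions. -/
lemma stack_decomp {k n m : ℕ} {h : (Fin n → ℝ) → (Fin m → ℝ)} (hs : IsStack k n m h) :
    ∀ i, ∃ G H : (Fin n → ℝ) → ℝ, RepIn k G ∧ RepIn k H ∧ ∀ x, h x i = G x - H x := by
  induction hs with
  | base n =>
      intro i
      refine ⟨fun x => x i, fun _ => 0, ?_, repIn_const 0 0, by simp⟩
      refine ⟨1, fun _ => Pi.single i 1, fun _ => 0, one_pos, ?_, ?_⟩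
      · rw [Set.range_const, convexHull_singleton]
        exact singleton_mem_newt _ 0
      · intro x
        rw [maxOn_fin_one]
        simp [Pi.single_apply, ite_mul]
  | @step k n m' m h T hT hh ih =>
      intro i
      obtain ⟨A, b, hAb⟩ := hT
      choose G H hG hH hGH using ih
      set U : (Fin n → ℝ) → ℝ :=
        fun x => (∑ j, (max (A i j) 0 * G j x + max (-(A i j)) 0 * H j x)) + b i with hU
      set V : (Fin n → ℝ) → ℝ :=
        fun x => ∑ j, (max (A i j) 0 * H j x + max (-(A i j)) 0 * G j x) with hV
      have hUr : RepIn k U := by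
        apply repIn_add _ (repIn_const k (b i))
        exact repIn_sum _ fun j =>
          repIn_add (repIn_smul (le_max_right _ _) (hG j)) (repIn_smul (le_max_right _ _) (hH j))
      have hVr : RepIn k V :=
        repIn_sum _ fun j =>
          repIn_add (repIn_smul (le_max_right _ _) (hH j)) (repIn_smul (le_max_right _ _) (hG j))
      have hdiff : ∀ x, U x - V x = (∑ j, A i j * h x j) + b i := by
        intro x
        have h5 : U x = (∑ j, (max (A i j) 0 * G j x + max (-(A i j)) 0 * H j x)) + b i := rfl
        have h6 : V x = ∑ j, (max (A i j) 0 * H j x + max (-(A i j)) 0 * G j x) := rfl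
        rw [h5, h6]
        have : (∑ j, (max (A i j) 0 * G j x + max (-(A i j)) 0 * H j x)) -
            ∑ j, (max (A i j) 0 * H j x + max (-(A i j)) 0 * G j x) = ∑ j, A i j * h x j := by
          rw [← Finset.sum_sub_distrib]
          refine Finset.sum_congr rfl fun j _ => ?_
          rw [hGH j x]
          have h3 := max_zero_sub_max_neg_zero_eq_self (A i j)
          linear_combination (G j x - H j x) * h3
        linarith [this]
      refine ⟨fun x => max (U x) (V x), V, repIn_max hUr hVr, repIn_mono hVr, ?_⟩
      intro x
      have h4 : (relu ∘ T ∘ h) x i = max 0 ((∑ j, A i j * h x j) + b i) := by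
        simp only [Function.comp_apply, relu, hAb (h x), Matrix.mulVec, dotProduct,
          Pi.add_apply]
      have h7 : max 0 (U x - V x) = max (U x) (V x) - V x := by
        rcases le_total (U x) (V x) with hc | hc
        · rw [max_eq_left (by linarith : U x - V x ≤ 0), max_eq_right hc]
          ring
        · rw [max_eq_right (by linarith : (0:ℝ) ≤ U x - V x), max_eq_left hc]
      rw [h4, ← hdiff x, h7]

end AuxRepIn
section AuxHomog

variable {n : ℕ}

lemma repIn_diff_to_newton {k : ℕ} {f : (Fin n → ℝ) → ℝ}
    (hpos : ∀ (lam : ℝ), 0 ≤ lam → ∀ x, f (lam • x) = lam * f x)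
    {U V : (Fin n → ℝ) → ℝ} (hU : RepIn k U) (hV : RepIn k V)
    (hf : ∀ x, f x = U x - V x) :
    ∃ g h : (Fin n → ℝ) → ℝ,
      ConvexWithNewtonIn n k g ∧ ConvexWithNewtonIn n k h ∧ ∀ x, f x = g x - h x := by
  obtain ⟨p, a, β, hp, ha, hu⟩ := hU
  obtain ⟨q, b, γ, hq, hb, hv⟩ := hV
  haveI : Nonempty (Fin p) := ⟨⟨0, hp⟩⟩
  haveI : Nonempty (Fin q) := ⟨⟨0, hq⟩⟩
  set g : (Fin n → ℝ) → ℝ := fun x => finMaxOn Finset.univ (fun i => ∑ t, a i t * x t) with hg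
  set h : (Fin n → ℝ) → ℝ := fun x => finMaxOn Finset.univ (fun i => ∑ t, b i t * x t) with hh
  refine ⟨g, h, ⟨p, a, hp, fun _ => rfl, ha⟩, ⟨q, b, hq, fun _ => rfl, hb⟩, ?_⟩
  intro x
  set B1 := finMaxOn Finset.univ (fun i => |β i|) with hB1
  set B2 := finMaxOn Finset.univ (fun i => |γ i|) with hB2
  have hB1' : ∀ i, |β i| ≤ B1 := fun i => by rw [hB1]; exact le_maxOn (fun i => |β i|) i
  have hB2' : ∀ i, |γ i| ≤ B2 := fun i => by rw [hB2]; exact le_maxOn (fun i => |γ i|) i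
  have hB1nn : 0 ≤ B1 := le_trans (abs_nonneg _) (hB1' (Classical.arbitrary _))
  have hB2nn : 0 ≤ B2 := le_trans (abs_nonneg _) (hB2' (Classical.arbitrary _))
  have key : ∀ t : ℝ, 0 < t → t * |f x - (g x - h x)| ≤ B1 + B2 := by
    intro t ht
    have h1 : f (t • x) = t * f x := hpos t ht.le x
    have hscale : ∀ {r : ℕ} (c : Fin r → Fin n → ℝ) (i : Fin r),
        (∑ s, c i s * (t • x) s) = t * ∑ s, c i s * x s := by
      intro r c i
      rw [Finset.mul_sum]
      exact Finset.sum_congr rfl fun s _ => by simp [Pi.smul_apply, smul_eq_mul]; ring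
    have hUx : U (t • x) = finMaxOn Finset.univ (fun i => t * (∑ s, a i s * x s) + β i) := by
      rw [hu (t • x)]
      congr 1
      funext i
      rw [hscale a i]
    have hVx : V (t • x) = finMaxOn Finset.univ (fun i => t * (∑ s, b i s * x s) + γ i) := by
      rw [hv (t • x)]
      congr 1
      funext i
      rw [hscale b i]
    have hUg : |U (t • x) - t * g x| ≤ B1 := by
      rw [hUx, hg]
      have := abs_maxOn_sub_maxOn_le (fun i => t * (∑ s, a i s * x s)) β hB1'
      rwa [maxOn_smul (fun i => ∑ s, a i s * x s) ht.le] at this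
    have hVh : |V (t • x) - t * h x| ≤ B2 := by
      rw [hVx, hh]
      have := abs_maxOn_sub_maxOn_le (fun i => t * (∑ s, b i s * x s)) γ hB2'
      rwa [maxOn_smul (fun i => ∑ s, b i s * x s) ht.le] at this
    have h2 : t * (f x - (g x - h x)) = (U (t • x) - t * g x) - (V (t • x) - t * h x) := by
      have h3 := hf (t • x)
      rw [h1] at h3
      linarith
    calc t * |f x - (g x - h x)| = |t * (f x - (g x - h x))| := by
          rw [abs_mul, abs_of_pos ht]
      _ = |(U (t • x) - t * g x) - (V (t • x) - t * h x)| := by rw [h2]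
      _ ≤ |U (t • x) - t * g x| + |V (t • x) - t * h x| := abs_sub _ _
      _ ≤ B1 + B2 := add_le_add hUg hVh
  by_contra hne
  have hd : 0 < |f x - (g x - h x)| := abs_pos.2 (sub_ne_zero.2 hne)
  have ht : 0 < (B1 + B2 + 1) / |f x - (g x - h x)| := by positivity
  have := key _ ht
  rw [div_mul_cancel₀ _ (ne_of_gt hd)] at this
  linarith

/-- Forward direction: a ReLU network computes a difference of Newton-polytope functions. -/
lemma inReLU_to_newton {k : ℕ} {f : (Fin n → ℝ) → ℝ}
    (hpos : ∀ (lam : ℝ), 0 ≤ lam → ∀ x, f (lam • x) = lam * f x)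
    (hf : InReLU n k f) :
    ∃ g h : (Fin n → ℝ) → ℝ,
      ConvexWithNewtonIn n k g ∧ ConvexWithNewtonIn n k h ∧ ∀ x, f x = g x - h x := by
  obtain ⟨m, g, c, hst, hform⟩ := hf
  choose G H hG hH hGH using stack_decomp hst
  set U : (Fin n → ℝ) → ℝ :=
    fun x => ∑ i, (max (c i) 0 * G i x + max (-(c i)) 0 * H i x) with hU
  set V : (Fin n → ℝ) → ℝ :=
    fun x => ∑ i, (max (c i) 0 * H i x + max (-(c i)) 0 * G i x) with hV
  have hUr : RepIn k U := repIn_sum _ fun i =>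
    repIn_add (repIn_smul (le_max_right _ _) (hG i)) (repIn_smul (le_max_right _ _) (hH i))
  have hVr : RepIn k V := repIn_sum _ fun i =>
    repIn_add (repIn_smul (le_max_right _ _) (hH i)) (repIn_smul (le_max_right _ _) (hG i))
  refine repIn_diff_to_newton hpos hUr hVr ?_
  intro x
  have h5 : U x = ∑ i, (max (c i) 0 * G i x + max (-(c i)) 0 * H i x) := rfl
  have h6 : V x = ∑ i, (max (c i) 0 * H i x + max (-(c i)) 0 * G i x) := rfl
  rw [hform x, h5, h6, ← Finset.sum_sub_distrib]
  refine Finset.sum_congr rfl fun i _ => ?_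
  rw [hGH i x]
  have h3 := max_zero_sub_max_neg_zero_eq_self (c i)
  linear_combination (H i x - G i x) * h3

end AuxHomog
section AuxNetwork
open Pointwise

lemma relu_decomp_scalar (a b : ℝ) :
    max 0 (a - b) + max 0 b - max 0 (-b) = max a b := by
  have h1 : max 0 b - max 0 (-b) = b := by
    rw [max_comm 0 b, max_comm 0 (-b)]
    exact max_zero_sub_max_neg_zero_eq_self b
  rcases le_total a b with hc | hc
  · rw [max_eq_left (by linarith : a - b ≤ 0), max_eq_right hc]
    linarith
  · rw [max_eq_right (by linarith : (0:ℝ) ≤ a - b), max_eq_left hc]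
    linarith

lemma newt_to_network (k : ℕ) : ∀ {n : ℕ} (ι : Type) (inst : Fintype ι)
    (P : ι → Set (Fin n → ℝ)), (∀ j, P j ∈ Newt n k) →
    ∃ (m : ℕ) (g : (Fin n → ℝ) → (Fin m → ℝ)), IsStack k n m g ∧
      ∀ j, ∃ (c : Fin m → ℝ) (u : (Fin n → ℝ) → ℝ),
        RepEq (P j) u ∧ ∀ x, u x = ∑ i, c i * g x i := by
  induction k with
  | zero =>
      intro n ι inst P hP
      haveI := inst
      have hP' : ∀ j, ∃ a : Fin n → ℝ, P j = {a} := hP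
      choose a ha using hP'
      refine ⟨n, id, IsStack.base n, fun j =>
        ⟨a j, fun x => ∑ t, a j t * x t, ?_, fun x => rfl⟩⟩
      rw [ha j]
      exact repEq_singleton (a j)
  | succ k ih =>
      intro n ι inst P hP
      haveI := inst
      classical
      have hP' : ∀ j, ∃ (p : ℕ) (Q R : Fin p → Set (Fin n → ℝ)),
          (∀ i, Q i ∈ Newt n k) ∧ (∀ i, R i ∈ Newt n k) ∧
          P j = ∑ i : Fin p, convexHull ℝ (Q i ∪ R i) := hP
      choose p Q R hQ hR hPsum using hP'
      obtain ⟨m', G, hG, hcu⟩ := ih ((j : ι) × Fin (p j) × Bool) inferInstance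
        (fun z => cond z.2.2 (Q z.1 z.2.1) (R z.1 z.2.1))
        (by rintro ⟨j, i, (_|_)⟩
            · exact hR j i
            · exact hQ j i)
      choose cc uu hRepEq hform using hcu
      set τ := ((j : ι) × Fin (p j)) × Fin 3 with hτ
      set e : τ ≃ Fin (Fintype.card τ) := Fintype.equivFin τ with he
      set row : τ → Fin m' → ℝ := fun w =>
        ![cc ⟨w.1.1, w.1.2, true⟩ - cc ⟨w.1.1, w.1.2, false⟩,
          cc ⟨w.1.1, w.1.2, false⟩, -(cc ⟨w.1.1, w.1.2, false⟩)] w.2 with hrow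
      set T : (Fin m' → ℝ) → (Fin (Fintype.card τ) → ℝ) :=
        fun y r => ∑ w, row (e.symm r) w * y w with hT
      have hTaff : IsAffineMap T := by
        refine ⟨fun r w => row (e.symm r) w, 0, fun y => ?_⟩
        funext r
        simp [hT, Matrix.mulVec, dotProduct]
      refine ⟨Fintype.card τ, relu ∘ T ∘ G, IsStack.step T hTaff hG, ?_⟩
      intro j
      set C : Fin (Fintype.card τ) → ℝ :=
        fun r => if (e.symm r).1.1 = j then (![1, 1, -1] : Fin 3 → ℝ) (e.symm r).2 else 0
        with hC
      refine ⟨C, fun x => ∑ z : Fin (p j),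
        max (uu ⟨j, z, true⟩ x) (uu ⟨j, z, false⟩ x), ?_, ?_⟩
      · rw [hPsum j]
        exact repEq_sum _ (fun z => fun x => max (uu ⟨j, z, true⟩ x) (uu ⟨j, z, false⟩ x))
          (fun z => repEq_max (hRepEq ⟨j, z, true⟩) (hRepEq ⟨j, z, false⟩))
      · intro x
        show _ = ∑ r, C r * max 0 (T (G x) r)
        rw [← Equiv.sum_comp e (fun r => C r * max 0 (T (G x) r))]
        have hstep : ∀ w : τ, C (e w) * max 0 (T (G x) (e w)) =
            (if w.1.1 = j then (![1, 1, -1] : Fin 3 → ℝ) w.2 else 0) *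
              max 0 (∑ v, row w v * G x v) := by
          intro w
          rw [hC, hT]
          simp only [Equiv.symm_apply_apply]
        rw [Finset.sum_congr rfl (fun w _ => hstep w)]
        have hrow0 : ∀ z : (j : ι) × Fin (p j), (∑ v, row ⟨z, 0⟩ v * G x v) =
            uu ⟨z.1, z.2, true⟩ x - uu ⟨z.1, z.2, false⟩ x := by
          intro z
          rw [hform ⟨z.1, z.2, true⟩ x, hform ⟨z.1, z.2, false⟩ x, ← Finset.sum_sub_distrib]
          refine Finset.sum_congr rfl fun v _ => ?_
          simp [hrow, sub_mul]
        have hrow1 : ∀ z : (j : ι) × Fin (p j), (∑ v, row ⟨z, 1⟩ v * G x v) =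
            uu ⟨z.1, z.2, false⟩ x := by
          intro z
          rw [hform ⟨z.1, z.2, false⟩ x]
          refine Finset.sum_congr rfl fun v _ => ?_
          simp [hrow, Matrix.cons_val_one, Matrix.head_cons]
        have hrow2 : ∀ z : (j : ι) × Fin (p j), (∑ v, row ⟨z, 2⟩ v * G x v) =
            -(uu ⟨z.1, z.2, false⟩ x) := by
          intro z
          rw [hform ⟨z.1, z.2, false⟩ x, ← Finset.sum_neg_distrib]
          refine Finset.sum_congr rfl fun v _ => ?_
          simp [hrow, neg_mul]
        rw [Fintype.sum_prod_type]
        have hz : ∀ z : (j : ι) × Fin (p j),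
            (∑ s : Fin 3, (if z.1 = j then (![1, 1, -1] : Fin 3 → ℝ) s else 0) *
              max 0 (∑ v, row ⟨z, s⟩ v * G x v)) =
            if z.1 = j then max (uu ⟨z.1, z.2, true⟩ x) (uu ⟨z.1, z.2, false⟩ x) else 0 := by
          intro z
          rw [Fin.sum_univ_three, hrow0 z, hrow1 z, hrow2 z]
          split_ifs with hcond
          · simp only [Matrix.cons_val_zero, Matrix.cons_val_one, Matrix.head_cons,
              Matrix.cons_val_two, Matrix.tail_cons]
            have := relu_decomp_scalar (uu ⟨z.1, z.2, true⟩ x) (uu ⟨z.1, z.2, false⟩ x)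
            linarith
          · ring
        rw [Finset.sum_congr rfl (fun z _ => hz z)]
        rw [← Finset.univ_sigma_univ, Finset.sum_sigma]
        have hinner : ∀ j' : ι, (∑ i : Fin (p j'),
            if (⟨j', i⟩ : (j : ι) × Fin (p j)).1 = j then
              max (uu ⟨j', i, true⟩ x) (uu ⟨j', i, false⟩ x) else 0) =
            if j' = j then ∑ i : Fin (p j'),
              max (uu ⟨j', i, true⟩ x) (uu ⟨j', i, false⟩ x) else 0 := by
          intro j'
          split_ifs with hcond
          · exact Finset.sum_congr rfl fun i _ => by simp [hcond]
          · exact Finset.sum_eq_zero fun i _ => by simp [hcond]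
        refine Eq.symm ?_
        rw [Finset.sum_congr rfl (fun j' _ => hinner j')]
        exact (Finset.sum_eq_single j (fun j' _ hne => if_neg hne)
          (fun hj => absurd (Finset.mem_univ j) hj)).trans (if_pos rfl)

/-- Reverse direction. -/
lemma newton_to_inReLU {n k : ℕ} {f : (Fin n → ℝ) → ℝ}
    (hgh : ∃ g h : (Fin n → ℝ) → ℝ,
      ConvexWithNewtonIn n k g ∧ ConvexWithNewtonIn n k h ∧ ∀ x, f x = g x - h x) :
    InReLU n k f := by
  obtain ⟨g, h, ⟨p, a, hp, hgmax, hgmem⟩, ⟨q, b, hq, hhmax, hhmem⟩, hf⟩ := hgh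
  obtain ⟨m, G, hstack, hcu⟩ := newt_to_network k Bool inferInstance
    (fun s => cond s (convexHull ℝ (Set.range a)) (convexHull ℝ (Set.range b)))
    (by rintro (_|_)
        · exact hhmem
        · exact hgmem)
  obtain ⟨c1, u1, hu1, hu1f⟩ := hcu true
  obtain ⟨c2, u2, hu2, hu2f⟩ := hcu false
  have hgu : ∀ x, g x = u1 x :=
    repEq_unique ⟨p, a, hp, rfl, hgmax⟩ hu1
  have hhu : ∀ x, h x = u2 x :=
    repEq_unique ⟨q, b, hq, rfl, hhmax⟩ hu2
  refine ⟨m, G, fun i => c1 i - c2 i, hstack, ?_⟩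
  intro x
  rw [hf x, hgu x, hhu x, hu1f x, hu2f x, ← Finset.sum_sub_distrib]
  exact Finset.sum_congr rfl fun i _ => by ring

end AuxNetwork
/-- a positively homogeneous CPWL function `f : ℝⁿ → ℝ` can be computed
by a ReLU neural network with `k` hidden layers if and only if `f = g − h` for positively
homogeneous convex CPWL functions `g, h` whose Newton polytopes lie in `Newt_n^(k)`. -/
theorem relu_iff_newton_difference (n k : ℕ) (f : (Fin n → ℝ) → ℝ)
    (hpos : ∀ (lam : ℝ), 0 ≤ lam → ∀ x, f (lam • x) = lam * f x)
    (hcpwl : IsCPWL f) :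
    InReLU n k f ↔ ∃ g h : (Fin n → ℝ) → ℝ,
      ConvexWithNewtonIn n k g ∧ ConvexWithNewtonIn n k h ∧ ∀ x, f x = g x - h x := by
  exact ⟨fun hf => inReLU_to_newton hpos hf, fun hgh => newton_to_inReLU hgh⟩
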